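/- Let α > 0, μ̃ > 0, t ∈ (0,1] and φ ≥ 0. Then the supremum, over all deterministic admissible strategies ζ on [0,t] with initial holdings φ, of the quantity ∫₀ᵗ ζ(r)·exp(−μ̃·r − α·∫₀ʳ ζ(v) dv) dr is equal to (1 − e^{−α·φ})/α. (This is the value f(t,φ) of the deterministic control problem corresponding to log-linear market impact g(ζ) = α·ζ.) -/

import Mathlib

open MeasureTheory intervalIntegral Set Filter Real Topology

lemma intInt_of_bound {f : ℝ → ℝ} (hf : Measurable f) (a b C : ℝ)
    (h : ∀ x ∈ Set.uIcc a b, |f x| ≤ C) : IntervalIntegrable f volume a b := by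
  rw [intervalIntegrable_iff]
  have hC : IntegrableOn (fun _ => C) (Set.uIoc a b) volume :=
    integrableOn_const (by simp)
  refine Integrable.mono' hC hf.aestronglyMeasurable ?_
  refine (ae_restrict_iff' measurableSet_uIoc).2 (ae_of_all _ fun x hx => ?_)
  simpa using h x (Set.uIoc_subset_uIcc hx)

lemma upper_core (α μ t : ℝ) (hα : 0 < α) (hμ : 0 ≤ μ) (ht : 0 ≤ t)
    (ζ : ℝ → ℝ) (hm : Measurable ζ) (M : ℝ) (h0 : ∀ r, 0 ≤ ζ r) (hM : ∀ r, ζ r ≤ M) :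
    (∫ r in (0:ℝ)..t, ζ r * Real.exp (-μ * r - α * ∫ v in (0:ℝ)..r, ζ v))
      ≤ (1 - Real.exp (-α * ∫ v in (0:ℝ)..t, ζ v)) / α := by
  set Z : ℝ → ℝ := fun r => ∫ v in (0:ℝ)..r, ζ v with hZdef
  have hζint : ∀ a b : ℝ, IntervalIntegrable ζ volume a b := fun a b =>
    intInt_of_bound hm a b M (fun x _ => by rw [abs_of_nonneg (h0 x)]; exact hM x)
  have hZab : ∀ a b : ℝ, Z b - Z a = ∫ v in a..b, ζ v := by
    intro a b
    rw [hZdef]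
    simp only
    rw [← integral_add_adjacent_intervals (hζint 0 a) (hζint a b)]
    ring
  have hZmono : Monotone Z := by
    intro a b hab
    have : 0 ≤ Z b - Z a := by
      rw [hZab]
      exact intervalIntegral.integral_nonneg hab fun x _ => h0 x
    linarith
  have hZcont : Continuous Z := intervalIntegral.continuous_primitive hζint 0
  have hZ0 : Z 0 = 0 := integral_same
  have hZnn : ∀ r, 0 ≤ r → 0 ≤ Z r := fun r hr => hZ0 ▸ hZmono hr
  set g : ℝ → ℝ := fun r => ζ r * Real.exp (-μ * r - α * Z r) with hgdef
  have hEcont : Continuous fun r => Real.exp (-μ * r - α * Z r) := by fun_prop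
  have hg_meas : Measurable g := hm.mul hEcont.measurable
  have hg_nonneg : ∀ r, 0 ≤ g r := fun r => mul_nonneg (h0 r) (Real.exp_pos _).le
  have hg_le : ∀ r, 0 ≤ r → g r ≤ ζ r := by
    intro r hr
    have hexp : Real.exp (-μ * r - α * Z r) ≤ 1 := by
      rw [Real.exp_le_one_iff]
      have := hZnn r hr
      nlinarith
    calc g r ≤ ζ r * 1 := mul_le_mul_of_nonneg_left hexp (h0 r)
    _ = ζ r := mul_one _
  have hgint : ∀ a b : ℝ, 0 ≤ a → 0 ≤ b → IntervalIntegrable g volume a b := by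
    intro a b ha hb
    refine intInt_of_bound hg_meas a b M (fun x hx => ?_)
    have hx0 : 0 ≤ x := le_trans (le_inf ha hb) hx.1
    rw [abs_of_nonneg (hg_nonneg x)]
    exact (hg_le x hx0).trans (hM x)
  show (∫ r in (0:ℝ)..t, g r) ≤ (1 - Real.exp (-α * Z t)) / α
  set W := Z t with hWdef
  have hW0 : 0 ≤ W := hZnn t ht
  rcases hW0.eq_or_lt with hW | hW
  · -- W = 0
    have hJ : (∫ r in (0:ℝ)..t, g r) ≤ ∫ r in (0:ℝ)..t, ζ r :=
      integral_mono_on ht (hgint 0 t le_rfl ht) (hζint 0 t) fun x hx => hg_le x hx.1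
    have h2 : (∫ r in (0:ℝ)..t, ζ r) = W := by
      have h3 := hZab 0 t
      rw [hZ0] at h3
      try rw [hWdef]
      try linarith
    rw [← hW]
    simp only [mul_zero, Real.exp_zero, sub_self, zero_div]
    rw [← hW] at h2
    linarith
  · have key : ∀ n : ℕ, 1 ≤ n →
        (∫ r in (0:ℝ)..t, g r) ≤ Real.exp (α * W / n) * ((1 - Real.exp (-α * W)) / α) := by
      intro n hn
      have hn0 : (0:ℝ) < n := by exact_mod_cast hn
      set v : ℕ → ℝ := fun i => i * W / n with hvdef
      have hiv : ∀ i, i ≤ n → ∃ s ∈ Icc 0 t, Z s = v i := by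
        intro i hi
        have h1 : v i ∈ Icc (Z 0) (Z t) := by
          rw [hZ0, ← hWdef]
          constructor
          · rw [hvdef]; positivity
          · rw [hvdef]; simp only
            rw [div_le_iff₀ hn0]
            have : (i:ℝ) ≤ n := by exact_mod_cast hi
            nlinarith
        obtain ⟨s, hs1, hs2⟩ := intermediate_value_Icc ht hZcont.continuousOn h1
        exact ⟨s, hs1, hs2⟩
      set r : ℕ → ℝ := fun i => if i = 0 then 0 else if h : i < n then (hiv i h.le).choose else t
        with hrdef
      have hrmem : ∀ i, r i ∈ Icc 0 t := by
        intro i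
        rw [hrdef]; simp only
        split_ifs with h1 h2
        · exact ⟨le_rfl, ht⟩
        · exact (hiv i h2.le).choose_spec.1
        · exact ⟨ht, le_rfl⟩
      have hrZ : ∀ i, i ≤ n → Z (r i) = v i := by
        intro i hi
        rw [hrdef]; simp only
        split_ifs with h1 h2
        · rw [h1, hZ0, hvdef]; simp
        · exact (hiv i h2.le).choose_spec.2
        · have hin : i = n := le_antisymm hi (not_lt.1 h2)
          rw [hin, hvdef, ← hWdef]; simp only
          field_simp
      have hr0 : r 0 = 0 := by simp [hrdef]
      have hrn : r n = t := by
        rw [hrdef]; simp only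
        rw [if_neg (by omega), dif_neg (lt_irrefl n)]
      have hrle : ∀ i, i < n → r i ≤ r (i + 1) := by
        intro i hi
        by_contra hc
        push_neg at hc
        have h1 := hZmono hc.le
        rw [hrZ (i+1) hi, hrZ i hi.le, hvdef] at h1
        simp only at h1
        rw [div_le_div_iff_of_pos_right hn0] at h1
        push_cast at h1
        nlinarith
      have hsplit : ∑ i ∈ Finset.range n, ∫ y in r i..r (i+1), g y = ∫ y in (0:ℝ)..t, g y := by
        rw [← hr0, ← hrn]
        exact sum_integral_adjacent_intervals fun i _ =>
          hgint _ _ (hrmem i).1 (hrmem (i+1)).1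
      have hpiece : ∀ i, i < n →
          (∫ y in r i..r (i+1), g y) ≤ Real.exp (-α * v i) * (W / n) := by
        intro i hi
        have hab := hrle i hi
        have h1 : (∫ y in r i..r (i+1), g y)
            ≤ ∫ y in r i..r (i+1), ζ y * Real.exp (-α * v i) := by
          refine integral_mono_on hab (hgint _ _ (hrmem i).1 (hrmem (i+1)).1)
            ((hζint _ _).mul_const _) fun y hy => ?_
          have hy0 : 0 ≤ y := (hrmem i).1.trans hy.1
          have hZy : v i ≤ Z y := by rw [← hrZ i hi.le]; exact hZmono hy.1
          have hexp : Real.exp (-μ * y - α * Z y) ≤ Real.exp (-α * v i) := by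
            apply Real.exp_le_exp.2; nlinarith
          exact mul_le_mul_of_nonneg_left hexp (h0 y)
        have h2 : (∫ y in r i..r (i+1), ζ y * Real.exp (-α * v i))
            = Real.exp (-α * v i) * (W / n) := by
          rw [intervalIntegral.integral_mul_const, ← hZab, hrZ (i+1) hi, hrZ i hi.le, hvdef]
          simp only
          push_cast
          field_simp
          ring
        linarith [h2.le]
      have hsum : (∫ y in (0:ℝ)..t, g y)
          ≤ ∑ i ∈ Finset.range n, Real.exp (-α * v i) * (W / n) := by
        rw [← hsplit]
        exact Finset.sum_le_sum fun i hi => hpiece i (Finset.mem_range.1 hi)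
      set x := α * W / n with hxdef
      have hx0 : 0 < x := by rw [hxdef]; positivity
      set q := Real.exp (-x) with hqdef
      have hq0 : 0 < q := Real.exp_pos _
      have hterm : ∀ i : ℕ, Real.exp (-α * v i) = q ^ i := by
        intro i
        rw [hqdef, ← Real.exp_nat_mul]
        congr 1
        rw [hvdef, hxdef]
        simp only
        ring
      have hqn : q ^ n = Real.exp (-α * W) := by
        rw [hqdef, ← Real.exp_nat_mul]
        congr 1
        rw [hxdef]
        field_simp
      have hS : (∑ i ∈ Finset.range n, q ^ i) * (1 - q) = 1 - q ^ n := by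
        have h := geom_sum_mul q n
        have h2 : (∑ i ∈ Finset.range n, q ^ i) * (1 - q)
            = -((∑ i ∈ Finset.range n, q ^ i) * (q - 1)) := by ring
        rw [h2, h]; ring
      have hSnn : 0 ≤ ∑ i ∈ Finset.range n, q ^ i :=
        Finset.sum_nonneg fun i _ => pow_nonneg hq0.le i
      have hxq : Real.exp x * (1 - q) = Real.exp x - 1 := by
        rw [hqdef, mul_sub, mul_one, ← Real.exp_add]
        simp
      have hWn : W / n ≤ Real.exp x * (1 - q) / α := by
        rw [le_div_iff₀ hα, hxq]
        have h1 := Real.add_one_le_exp x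
        have h2 : W / n * α = x := by rw [hxdef]; ring
        linarith
      calc (∫ y in (0:ℝ)..t, g y)
          ≤ ∑ i ∈ Finset.range n, Real.exp (-α * v i) * (W / n) := hsum
        _ = (∑ i ∈ Finset.range n, q ^ i) * (W / n) := by
            rw [Finset.sum_mul]
            exact Finset.sum_congr rfl fun i _ => by rw [hterm]
        _ ≤ (∑ i ∈ Finset.range n, q ^ i) * (Real.exp x * (1 - q) / α) :=
            mul_le_mul_of_nonneg_left hWn hSnn
        _ = Real.exp x * ((∑ i ∈ Finset.range n, q ^ i) * (1 - q)) / α := by ring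
        _ = Real.exp x * ((1 - Real.exp (-α * W)) / α) := by rw [hS, hqn]; ring
    have hlim : Tendsto (fun n : ℕ => Real.exp (α * W / n) * ((1 - Real.exp (-α * W)) / α))
        atTop (𝓝 (Real.exp 0 * ((1 - Real.exp (-α * W)) / α))) := by
      apply Filter.Tendsto.mul_const
      exact (Real.continuous_exp.tendsto 0).comp (tendsto_const_div_atTop_nhds_zero_nat (α * W))
    rw [Real.exp_zero, one_mul] at hlim
    exact ge_of_tendsto hlim (eventually_atTop.2 ⟨1, fun n hn => key n hn⟩)

lemma indicator_Z (τ c : ℝ) (s : ℝ) (hs : 0 ≤ s) (hτ : 0 ≤ τ) :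
    (∫ v in (0:ℝ)..s, (Set.Iic τ).indicator (fun _ => c) v) = c * min s τ := by
  rw [intervalIntegral.integral_of_le hs,
    MeasureTheory.setIntegral_indicator measurableSet_Iic]
  have h1 : Ioc (0:ℝ) s ∩ Iic τ = Ioc 0 (min s τ) := by
    ext y
    simp only [Set.mem_inter_iff, Set.mem_Ioc, Set.mem_Iic, le_min_iff]
    tauto
  rw [h1, MeasureTheory.setIntegral_const, Real.volume_real_Ioc_of_le (le_min hs hτ), smul_eq_mul,
    sub_zero]
  ring

lemma indicator_value (α μ t τ c : ℝ) (hk : 0 < μ + α * c) (hτ0 : 0 < τ) (hτt : τ ≤ t)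
    (hc : 0 ≤ c) :
    (∫ r in (0:ℝ)..t, ((Set.Iic τ).indicator (fun _ => c) r) *
        Real.exp (-μ * r - α * ∫ v in (0:ℝ)..r, (Set.Iic τ).indicator (fun _ => c) v))
      = c * ((1 - Real.exp (-(μ + α * c) * τ)) / (μ + α * c)) := by
  have ht0 : (0:ℝ) ≤ t := hτ0.le.trans hτt
  set Z : ℝ → ℝ := fun s => ∫ v in (0:ℝ)..s, (Set.Iic τ).indicator (fun _ => c) v with hZdef
  have hfun : ∀ r : ℝ, ((Set.Iic τ).indicator (fun _ => c) r) * Real.exp (-μ * r - α * Z r)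
      = (Set.Iic τ).indicator (fun r => c * Real.exp (-μ * r - α * Z r)) r := by
    intro r
    by_cases h : r ∈ Set.Iic τ
    · rw [Set.indicator_of_mem h, Set.indicator_of_mem h]
    · rw [Set.indicator_of_notMem h, Set.indicator_of_notMem h, zero_mul]
  have step1 : (∫ r in (0:ℝ)..t, ((Set.Iic τ).indicator (fun _ => c) r)
        * Real.exp (-μ * r - α * Z r))
      = ∫ r in (0:ℝ)..τ, c * Real.exp (-μ * r - α * Z r) := by
    rw [intervalIntegral.integral_congr (fun r _ => hfun r)]
    exact intervalIntegral.integral_indicator ⟨hτ0.le, hτt⟩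
  have step2 : (∫ r in (0:ℝ)..τ, c * Real.exp (-μ * r - α * Z r))
      = ∫ r in (0:ℝ)..τ, c * Real.exp (-(μ + α * c) * r) := by
    apply intervalIntegral.integral_congr
    intro r hr
    rw [Set.uIcc_of_le hτ0.le] at hr
    simp only
    have hZr : Z r = c * r := by
      rw [hZdef]
      simp only
      rw [indicator_Z τ c r hr.1 hτ0.le, min_eq_left hr.2]
    rw [hZr]
    congr 1
    ring
  have hder : ∀ r : ℝ, HasDerivAt (fun y => -(Real.exp (-(μ + α * c) * y)) / (μ + α * c))
      (Real.exp (-(μ + α * c) * r)) r := by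
    intro r
    have h1 : HasDerivAt (fun y : ℝ => -(μ + α * c) * y) (-(μ + α * c)) r := by
      simpa using (hasDerivAt_id r).const_mul (-(μ + α * c))
    have h3 := (h1.exp.div_const (μ + α * c)).neg
    have h4 : (fun y => -(Real.exp (-(μ + α * c) * y)) / (μ + α * c))
        = fun y => -(Real.exp (-(μ + α * c) * y) / (μ + α * c)) := by
      funext y; ring
    rw [h4]
    refine h3.congr_deriv ?_
    have hh : -(Real.exp (-(μ + α * c) * r) * -(μ + α * c) / (μ + α * c))
        = Real.exp (-(μ + α * c) * r) * ((μ + α * c) / (μ + α * c)) := by ring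
    rw [hh, div_self hk.ne', mul_one]
  have hcont : Continuous fun r : ℝ => Real.exp (-(μ + α * c) * r) := by fun_prop
  have step3 : (∫ r in (0:ℝ)..τ, Real.exp (-(μ + α * c) * r))
      = (1 - Real.exp (-(μ + α * c) * τ)) / (μ + α * c) := by
    rw [intervalIntegral.integral_eq_sub_of_hasDerivAt (fun r _ => hder r)
      (hcont.intervalIntegrable 0 τ)]
    rw [mul_zero, Real.exp_zero]
    field_simp
    ring
  rw [step1, step2, intervalIntegral.integral_const_mul, step3]

/-- The value of the deterministic control problem with log-linear
market impact `g(ζ) = α ζ`: the supremum over all deterministic admissible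
strategies on `[0,t]` with initial holdings `φ` of the discounted proceeds equals
`(1 - exp (-α φ)) / α`. -/
theorem logLinear_value (α μ t φ : ℝ) (hα : 0 < α) (hμ : 0 < μ)
    (ht : t ∈ Set.Ioc (0 : ℝ) 1) (hφ : 0 ≤ φ) :
    sSup {y : ℝ | ∃ ζ : ℝ → ℝ, Measurable ζ ∧
        (∃ M : ℝ, ∀ r ∈ Set.Icc (0 : ℝ) t, ζ r ≤ M) ∧
        (∀ r ∈ Set.Icc (0 : ℝ) t, 0 ≤ ζ r) ∧
        (∫ r in (0 : ℝ)..t, ζ r) ≤ φ ∧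
        y = ∫ r in (0 : ℝ)..t,
              ζ r * Real.exp (-μ * r - α * ∫ v in (0 : ℝ)..r, ζ v)}
      = (1 - Real.exp (-α * φ)) / α := by
  obtain ⟨ht0, ht1⟩ := ht
  set S := {y : ℝ | ∃ ζ : ℝ → ℝ, Measurable ζ ∧
        (∃ M : ℝ, ∀ r ∈ Set.Icc (0 : ℝ) t, ζ r ≤ M) ∧
        (∀ r ∈ Set.Icc (0 : ℝ) t, 0 ≤ ζ r) ∧
        (∫ r in (0 : ℝ)..t, ζ r) ≤ φ ∧
        y = ∫ r in (0 : ℝ)..t,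
              ζ r * Real.exp (-μ * r - α * ∫ v in (0 : ℝ)..r, ζ v)} with hSdef
  have upper : ∀ y ∈ S, y ≤ (1 - Real.exp (-α * φ)) / α := by
    rintro y ⟨ζ, hmeas, ⟨M, hM⟩, h0, hconstraint, rfl⟩
    set ζ' : ℝ → ℝ := (Set.Icc (0:ℝ) t).indicator ζ with hζ'def
    have hζ'meas : Measurable ζ' := hmeas.indicator measurableSet_Icc
    have h0' : ∀ r, 0 ≤ ζ' r := by
      intro r
      rw [hζ'def]
      apply Set.indicator_nonneg
      intro s hs
      exact h0 s hs
    have hM' : ∀ r, ζ' r ≤ max M 0 := by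
      intro r
      rw [hζ'def]
      by_cases h : r ∈ Set.Icc (0:ℝ) t
      · rw [Set.indicator_of_mem h]
        exact (hM r h).trans (le_max_left _ _)
      · rw [Set.indicator_of_notMem h]
        exact le_max_right _ _
    have hinner : ∀ r ∈ Set.Icc (0:ℝ) t,
        (∫ v in (0:ℝ)..r, ζ' v) = ∫ v in (0:ℝ)..r, ζ v := by
      intro r hr
      apply intervalIntegral.integral_congr
      intro s hs
      rw [Set.uIcc_of_le hr.1] at hs
      simp only [hζ'def]
      apply Set.indicator_of_mem
      exact Set.mem_Icc.2 ⟨hs.1, hs.2.trans hr.2⟩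
    have heq : (∫ r in (0:ℝ)..t, ζ r * Real.exp (-μ * r - α * ∫ v in (0:ℝ)..r, ζ v))
        = ∫ r in (0:ℝ)..t, ζ' r * Real.exp (-μ * r - α * ∫ v in (0:ℝ)..r, ζ' v) := by
      apply intervalIntegral.integral_congr
      intro s hs
      rw [Set.uIcc_of_le ht0.le] at hs
      beta_reduce; rw [hinner s hs]; simp only [hζ'def, Set.indicator_of_mem hs]
    rw [heq]
    refine (upper_core α μ t hα hμ.le ht0.le ζ' hζ'meas (max M 0) h0' hM').trans ?_
    have hZ't : (∫ v in (0:ℝ)..t, ζ' v) ≤ φ := by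
      rw [hinner t ⟨ht0.le, le_rfl⟩]; exact hconstraint
    have h5 : Real.exp (-α * φ) ≤ Real.exp (-α * ∫ v in (0:ℝ)..t, ζ' v) :=
      Real.exp_le_exp.2 (by nlinarith)
    rw [div_le_div_iff₀ hα hα]
    nlinarith
  have hBnn : 0 ≤ (1 - Real.exp (-α * φ)) / α := by
    apply div_nonneg _ hα.le
    have : Real.exp (-α * φ) ≤ 1 := Real.exp_le_one_iff.2 (by nlinarith)
    linarith
  apply le_antisymm
  · exact Real.sSup_le upper hBnn
  · rcases hφ.eq_or_lt with hφ0 | hφ0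
    · -- φ = 0
      rw [← hφ0]
      simp only [mul_zero, Real.exp_zero, sub_self, zero_div]
      have hmem : (0:ℝ) ∈ S := by
        refine ⟨fun _ => 0, measurable_const, ⟨0, fun r _ => le_rfl⟩, fun r _ => le_rfl, ?_, ?_⟩
        · simpa using hφ
        · simp
      exact le_csSup ⟨_, upper⟩ hmem
    · -- φ > 0
      have hbdd : BddAbove S := ⟨_, upper⟩
      set G : ℝ → ℝ := fun u => φ / (u + α * φ) * (1 - Real.exp (-(u + α * φ))) with hGdef
      have hmem : ∀ n : ℕ, 1 ≤ n → G (μ * t / n) ∈ S := by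
        intro n hn
        have hn0 : (0:ℝ) < n := by exact_mod_cast hn
        have hn1 : (1:ℝ) ≤ n := by exact_mod_cast hn
        set τ : ℝ := t / n with hτdef
        set c : ℝ := n * φ / t with hcdef
        have hτ0 : 0 < τ := by positivity
        have hτt : τ ≤ t := div_le_self ht0.le hn1
        have hc0 : 0 < c := by positivity
        have hk : 0 < μ + α * c := by positivity
        refine ⟨(Set.Iic τ).indicator (fun _ => c), measurable_const.indicator measurableSet_Iic,
          ⟨c, fun r _ => ?_⟩, fun r _ => ?_, ?_, ?_⟩
        · by_cases h : r ∈ Set.Iic τ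
          · rw [Set.indicator_of_mem h]
          · rw [Set.indicator_of_notMem h]; exact hc0.le
        · by_cases h : r ∈ Set.Iic τ
          · rw [Set.indicator_of_mem h]; exact hc0.le
          · rw [Set.indicator_of_notMem h]
        · rw [indicator_Z τ c t ht0.le hτ0.le, min_eq_right hτt, hcdef, hτdef]
          field_simp
          exact le_rfl
        · rw [indicator_value α μ t τ c hk hτ0 hτt hc0.le]
          -- G (μ*t/n) = c * ((1 - exp(-(μ+αc)τ))/(μ+αc))
          have harg : (μ + α * c) * τ = μ * t / n + α * φ := by
            rw [hcdef, hτdef]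
            field_simp
          have hcoef : φ / (μ * t / n + α * φ) = c / (μ + α * c) := by
            rw [div_eq_div_iff (by positivity : (0:ℝ) < μ * t / ↑n + α * φ).ne' hk.ne', hcdef]
            field_simp
          rw [hGdef]
          simp only
          rw [hcoef, ← harg]
          ring
      have hGcont : ContinuousAt G 0 := by
        have h1 : ContinuousAt (fun u : ℝ => u + α * φ) 0 := by fun_prop
        have hne : (0:ℝ) + α * φ ≠ 0 := by positivity
        exact (continuousAt_const.div h1 hne).mul
          (continuousAt_const.sub ((Real.continuous_exp.continuousAt).comp h1.neg))
      have hG0 : G 0 = (1 - Real.exp (-α * φ)) / α := by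
        rw [hGdef]
        simp only [zero_add]
        rw [neg_mul]
        field_simp
      have hlim : Tendsto (fun n : ℕ => G (μ * t / n)) atTop (𝓝 ((1 - Real.exp (-α * φ)) / α)) := by
        rw [← hG0]
        exact hGcont.tendsto.comp (tendsto_const_div_atTop_nhds_zero_nat (μ * t))
      exact le_of_tendsto hlim (eventually_atTop.2
        ⟨1, fun n hn => le_csSup hbdd (hmem n hn)⟩)
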